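/- Law of large numbers for the optimal and suboptimal loads: under assumption (C1), almost surely lim_{n→∞} ρₙ/n = lim_{n→∞} ρ̄ₙ/n = γ. -/

import Mathlib

open MeasureTheory Filter Asymptotics Topology

noncomputable section

namespace LoadOpt

/-- `j = e^{2iπ/3}`, primitive cube root of unity. -/
def jc : ℂ := Complex.exp (2 * Real.pi * Complex.I / 3)

/-- `λ = 2 (3√3)^{-1/2}`. -/
def lam : ℝ := 2 / Real.sqrt (3 * Real.sqrt 3)

/-- The bins `B₁, B₂, B₃` (indexed by `0, 1, 2`). -/
def Bin : Fin 3 → ℂ := ![jc ^ 2 * (lam * Complex.I), (lam : ℂ) * Complex.I, jc * (lam * Complex.I)]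

/-- The triangle `𝕋`, convex hull of the three bins. -/
def Tri : Set ℂ := convexHull ℝ {Bin 0, Bin 1, Bin 2}

/-- Cost functions `c₁, c₂, c₃` (indexed by `0, 1, 2`). -/
def costs (c : ℂ → ℝ) : Fin 3 → ℂ → ℝ := ![c, fun x => c (jc ^ 2 * x), fun x => c (jc * x)]

/-- Half-lines removed to make the Voronoi cells a partition: `D₁ = {ijt : t < 0}`,
`D_l = {ij^l t : t ≤ 0}` for `l = 2, 3`. -/
def Dl : Fin 3 → Set ℂ :=
  ![{z | ∃ t : ℝ, t < 0 ∧ z = Complex.I * jc * t},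
    {z | ∃ t : ℝ, t ≤ 0 ∧ z = Complex.I * jc ^ 2 * t},
    {z | ∃ t : ℝ, t ≤ 0 ∧ z = Complex.I * jc ^ 3 * t}]

/-- The Voronoi cells `𝕋₁, 𝕋₂, 𝕋₃` (indexed by `0, 1, 2`). -/
def cell (l : Fin 3) : Set ℂ :=
  {x ∈ Tri | dist x (Bin l) = ⨅ m : Fin 3, dist x (Bin m)} \ Dl l

/-- The load `ρₙ(A)` of the allocation `A` of the points `x 0, …, x (n-1)`. -/
def load (c : ℂ → ℝ) {n : ℕ} (x : Fin n → ℂ) (A : Fin n → Fin 3) : ℝ :=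
  Finset.univ.sup' Finset.univ_nonempty fun l => ∑ k, if A k = l then costs c l (x k) else 0

/-- The optimal load `ρₙ`. -/
def optLoad (c : ℂ → ℝ) {n : ℕ} (x : Fin n → ℂ) : ℝ :=
  Finset.univ.inf' Finset.univ_nonempty fun A : Fin n → Fin 3 => load c x A

/-- The suboptimal load `ρ̄ₙ`, allocating each point to the bin of its Voronoi cell. -/
def subLoad (c : ℂ → ℝ) {n : ℕ} (x : Fin n → ℂ) : ℝ :=
  Finset.univ.sup' Finset.univ_nonempty fun l => ∑ k, (cell l).indicator (costs c l) (x k)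

/-- `γ = ∫_{𝕋₁} c`. -/
def gamma (c : ℂ → ℝ) : ℝ := ∫ x in cell 0, c x

/-- Assumption (C1). -/
def C1 (c : ℂ → ℝ) : Prop :=
  ∀ x ∈ Tri, ∀ l : Fin 3, l ≠ 0 → dist x (Bin 0) < dist x (Bin l) → costs c 0 x < costs c l x

/-- Assumption (C2): symmetry of `c` w.r.t. the line through `0` and `B₁`, plus a Lipschitz
property near `D₁ ∪ D₃`. -/
def C2 (c : ℂ → ℝ) : Prop :=
  (∀ θ ∈ Set.Icc (0 : ℝ) (2 * Real.pi), ∀ t : ℝ, 0 < t →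
      (t : ℂ) * Complex.exp ((θ : ℂ) * Complex.I) ∈ Tri →
      c ((t : ℂ) * Complex.exp ((θ : ℂ) * Complex.I))
        = c ((t : ℂ) * Complex.exp (((-θ - Real.pi / 3 : ℝ) : ℂ) * Complex.I))) ∧
  ∃ (K : NNReal) (U : Set ℂ), IsOpen U ∧ Dl 0 ∪ Dl 2 ⊆ U ∧ LipschitzOnWith K c U


lemma jc_cube : jc ^ 3 = 1 := by
  rw [jc, ← Complex.exp_nat_mul]
  rw [show (3:ℕ) * (2 * Real.pi * Complex.I / 3) = 2 * Real.pi * Complex.I by push_cast; ring]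
  exact Complex.exp_two_pi_mul_I

lemma jc_ne_zero : jc ≠ 0 := Complex.exp_ne_zero _

lemma abs_jc : ‖jc‖ = 1 := by
  rw [jc, Complex.norm_exp]
  norm_num [Complex.div_re, Complex.normSq, Complex.mul_re]

lemma jc_eq_circle : jc = (Circle.exp (2 * Real.pi / 3) : ℂ) := by
  rw [Circle.coe_exp, jc]
  congr 1
  push_cast
  ring

lemma im_jc_pos : 0 < jc.im := by
  rw [jc, show 2 * Real.pi * Complex.I / 3 = ((2 * Real.pi / 3 : ℝ) : ℂ) * Complex.I by push_cast; ring,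
    Complex.exp_mul_I]
  simp only [Complex.add_im, Complex.cos_ofReal_im, Complex.mul_im, Complex.sin_ofReal_re,
    Complex.I_im, Complex.sin_ofReal_im, Complex.I_re]
  have := Real.pi_pos
  have h : 0 < Real.sin (2 * Real.pi / 3) := Real.sin_pos_of_pos_of_lt_pi (by linarith) (by linarith)
  simpa using h

lemma jc_ne_one : jc ≠ 1 := by
  intro h
  have := im_jc_pos
  rw [h] at this
  simp at this


lemma jc_sq_ne_one : jc ^ 2 ≠ 1 := by
  intro h
  apply jc_ne_one
  have : jc ^ 3 = jc * jc ^ 2 := by ring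
  rw [jc_cube, h, mul_one] at this
  exact this.symm

lemma lam_pos : 0 < lam := by
  have h3 : (0:ℝ) < Real.sqrt 3 := Real.sqrt_pos.2 (by norm_num)
  exact div_pos (by norm_num) (Real.sqrt_pos.2 (by positivity))

lemma lamI_ne_zero : (lam : ℂ) * Complex.I ≠ 0 := by
  simp [Complex.ext_iff, lam_pos.ne']

lemma jc4 : jc ^ 4 = jc := by
  rw [show (jc:ℂ)^4 = jc^3 * jc by ring, jc_cube, one_mul]

lemma bin_rot2 (m : Fin 3) : Bin m = jc ^ 2 * Bin (m + 1) := by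
  fin_cases m
  · first | (simp [Bin]; ring) | simp [Bin]
  · show (lam:ℂ) * Complex.I = jc^2 * (jc * ((lam:ℂ)*Complex.I))
    rw [show (jc:ℂ)^2 * (jc * ((lam:ℂ)*Complex.I)) = jc^3 * ((lam:ℂ)*Complex.I) by ring, jc_cube]
    ring
  · show jc * ((lam:ℂ) * Complex.I) = jc^2 * (jc^2 * ((lam:ℂ)*Complex.I))
    rw [show (jc:ℂ)^2 * (jc^2 * ((lam:ℂ)*Complex.I)) = jc^4 * ((lam:ℂ)*Complex.I) by ring, jc4]

lemma bin_rot1 (m : Fin 3) : Bin m = jc * Bin (m + 2) := by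
  fin_cases m
  · simp [Bin]; ring
  · show (lam:ℂ) * Complex.I = jc * (jc^2 * ((lam:ℂ)*Complex.I))
    rw [show (jc:ℂ) * (jc^2 * ((lam:ℂ)*Complex.I)) = jc^3 * ((lam:ℂ)*Complex.I) by ring, jc_cube]
    ring
  · simp [Bin]

lemma bins_ne : ∀ l m : Fin 3, l ≠ m → Bin l ≠ Bin m := by
  have h1 : Bin 0 ≠ Bin 1 := by
    simp only [Bin, Matrix.cons_val_zero, Matrix.cons_val_one, Matrix.head_cons]
    intro h
    exact jc_sq_ne_one ((mul_eq_right₀ lamI_ne_zero).1 h)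
  have h2 : Bin 1 ≠ Bin 2 := by
    simp only [Bin, Matrix.cons_val_one, Matrix.head_cons]
    intro h
    exact jc_ne_one ((mul_eq_right₀ lamI_ne_zero).1 h.symm)
  have h3 : Bin 0 ≠ Bin 2 := by
    simp only [Bin, Matrix.cons_val_zero]
    intro h
    have : jc ^ 2 = jc := mul_right_cancel₀ lamI_ne_zero h
    apply jc_ne_one
    have h2 : jc * jc = jc * 1 := by rw [mul_one, ← pow_two]; exact this
    exact mul_left_cancel₀ jc_ne_zero h2
  intro l m hlm
  intro h
  fin_cases l <;> fin_cases m <;> simp_all <;>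
    first | exact h1 h | exact h2 h | exact h3 h | exact h1 h.symm | exact h2 h.symm | exact h3 h.symm

lemma dist_rot2 (x : ℂ) (m : Fin 3) : dist (jc ^ 2 * x) (Bin m) = dist x (Bin (m + 1)) := by
  rw [bin_rot2 m, Complex.dist_eq, Complex.dist_eq, ← mul_sub, norm_mul, norm_pow, abs_jc]
  ring

lemma dist_rot1 (x : ℂ) (m : Fin 3) : dist (jc * x) (Bin m) = dist x (Bin (m + 2)) := by
  rw [bin_rot1 m, Complex.dist_eq, Complex.dist_eq, ← mul_sub, norm_mul, abs_jc]
  ring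

lemma iInf_fin3 (f : Fin 3 → ℝ) : (⨅ m, f m) = min (f 0) (min (f 1) (f 2)) := by
  apply le_antisymm
  · have hb : BddBelow (Set.range f) := (Set.finite_range f).bddBelow
    exact le_min (ciInf_le hb 0) (le_min (ciInf_le hb 1) (ciInf_le hb 2))
  · apply le_ciInf
    intro m
    fin_cases m
    · exact min_le_left _ _
    · exact le_trans (min_le_right _ _) (min_le_left _ _)
    · exact le_trans (min_le_right _ _) (min_le_right _ _)

lemma iInf_dist_rot2 (x : ℂ) :
    (⨅ m : Fin 3, dist (jc ^ 2 * x) (Bin m)) = ⨅ m : Fin 3, dist x (Bin m) := by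
  simp only [iInf_fin3, dist_rot2]
  show min (dist x (Bin 1)) (min (dist x (Bin 2)) (dist x (Bin 0)))
      = min (dist x (Bin 0)) (min (dist x (Bin 1)) (dist x (Bin 2)))
  simp [min_comm, min_assoc, min_left_comm]

lemma iInf_dist_rot1 (x : ℂ) :
    (⨅ m : Fin 3, dist (jc * x) (Bin m)) = ⨅ m : Fin 3, dist x (Bin m) := by
  simp only [iInf_fin3, dist_rot1]
  show min (dist x (Bin 2)) (min (dist x (Bin 0)) (dist x (Bin 1)))
      = min (dist x (Bin 0)) (min (dist x (Bin 1)) (dist x (Bin 2)))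
  simp [min_comm, min_assoc, min_left_comm]

lemma tri_rot2 (x : ℂ) : jc ^ 2 * x ∈ Tri ↔ x ∈ Tri := by
  have key : ∀ y ∈ Tri, jc ^ 2 * y ∈ Tri := by
    intro y hy
    have himg := (LinearMap.mulLeft ℝ (jc ^ 2)).image_convexHull ({Bin 0, Bin 1, Bin 2} : Set ℂ)
    have hset : (LinearMap.mulLeft ℝ (jc ^ 2)) '' ({Bin 0, Bin 1, Bin 2} : Set ℂ)
        = ({Bin 0, Bin 1, Bin 2} : Set ℂ) := by
      simp only [Set.image_insert_eq, Set.image_singleton, LinearMap.mulLeft_apply]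
      have e0 : jc ^ 2 * Bin 0 = Bin 2 := by simpa using (bin_rot2 2).symm
      have e1 : jc ^ 2 * Bin 1 = Bin 0 := by simpa using (bin_rot2 0).symm
      have e2 : jc ^ 2 * Bin 2 = Bin 1 := by simpa using (bin_rot2 1).symm
      rw [e0, e1, e2]
      ext z
      simp only [Set.mem_insert_iff, Set.mem_singleton_iff]
      tauto
    have : jc ^ 2 * y ∈ (LinearMap.mulLeft ℝ (jc ^ 2)) '' (convexHull ℝ {Bin 0, Bin 1, Bin 2}) :=
      ⟨y, hy, rfl⟩
    rw [himg, hset] at this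
    exact this
  constructor
  · intro h
    have h2 := key _ h
    have h3 := key _ h2
    have : jc ^ 2 * (jc ^ 2 * (jc ^ 2 * x)) = x := by
      rw [show jc ^ 2 * (jc ^ 2 * (jc ^ 2 * x)) = (jc^3)^2 * x by ring, jc_cube, one_pow, one_mul]
    rwa [this] at h3
  · exact key x

lemma tri_rot1 (x : ℂ) : jc * x ∈ Tri ↔ x ∈ Tri := by
  constructor
  · intro h
    have := (tri_rot2 (jc * x)).2 h
    rwa [show jc ^ 2 * (jc * x) = jc ^ 3 * x by ring, jc_cube, one_mul] at this
  · intro h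
    have := (tri_rot2 (jc ^ 2 * x)).2 ((tri_rot2 x).2 h)
    rwa [show jc ^ 2 * (jc ^ 2 * x) = jc * (jc ^ 3 * x) by ring, jc_cube, one_mul] at this

lemma mem_Dl0 {z : ℂ} : z ∈ Dl 0 ↔ ∃ t : ℝ, t < 0 ∧ z = Complex.I * jc * t := Iff.rfl
lemma mem_Dl1 {z : ℂ} : z ∈ Dl 1 ↔ ∃ t : ℝ, t ≤ 0 ∧ z = Complex.I * jc ^ 2 * t := Iff.rfl
lemma mem_Dl2 {z : ℂ} : z ∈ Dl 2 ↔ ∃ t : ℝ, t ≤ 0 ∧ z = Complex.I * jc ^ 3 * t := Iff.rfl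

lemma zero_mem_Dl1 : (0 : ℂ) ∈ Dl 1 := ⟨0, le_refl 0, by simp⟩
lemma zero_mem_Dl2 : (0 : ℂ) ∈ Dl 2 := ⟨0, le_refl 0, by simp⟩

lemma Ijc_ne_zero (k : ℕ) : Complex.I * jc ^ k ≠ 0 :=
  mul_ne_zero Complex.I_ne_zero (pow_ne_zero _ jc_ne_zero)

lemma cell1_iff (x : ℂ) : x ∈ cell 1 ↔ jc ^ 2 * x ∈ cell 0 ∧ x ≠ 0 := by
  constructor
  · rintro ⟨⟨hT, hd⟩, hD⟩
    have hx0 : x ≠ 0 := fun h => hD (h ▸ zero_mem_Dl1)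
    refine ⟨⟨⟨(tri_rot2 x).2 hT, ?_⟩, ?_⟩, hx0⟩
    · rw [iInf_dist_rot2, dist_rot2]
      exact hd
    · rintro ⟨t, ht, hz⟩
      apply hD
      refine ⟨t, ht.le, ?_⟩
      have : jc * (jc ^ 2 * x) = jc * (Complex.I * jc * t) := by rw [hz]
      rw [show jc * (jc ^ 2 * x) = jc ^ 3 * x by ring, jc_cube, one_mul] at this
      rw [this]; ring
  · rintro ⟨⟨⟨hT, hd⟩, hD⟩, hx0⟩
    rw [iInf_dist_rot2, dist_rot2] at hd
    refine ⟨⟨(tri_rot2 x).1 hT, hd⟩, ?_⟩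
    rintro ⟨t, ht, hz⟩
    rcases lt_or_eq_of_le ht with ht' | ht'
    · apply hD
      refine ⟨t, ht', ?_⟩
      rw [hz, show jc ^ 2 * (Complex.I * jc ^ 2 * t) = Complex.I * (jc ^ 3 * jc) * t by ring,
        jc_cube, one_mul]
    · apply hx0
      simp [hz, ht']
  
lemma cell2_iff (x : ℂ) : x ∈ cell 2 ↔ jc * x ∈ cell 0 ∧ x ≠ 0 := by
  constructor
  · rintro ⟨⟨hT, hd⟩, hD⟩
    have hx0 : x ≠ 0 := fun h => hD (h ▸ zero_mem_Dl2)
    refine ⟨⟨⟨(tri_rot1 x).2 hT, ?_⟩, ?_⟩, hx0⟩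
    · rw [iInf_dist_rot1, dist_rot1]
      exact hd
    · rintro ⟨t, ht, hz⟩
      apply hD
      refine ⟨t, ht.le, ?_⟩
      have : jc ^ 2 * (jc * x) = jc ^ 2 * (Complex.I * jc * t) := by rw [hz]
      rw [show jc ^ 2 * (jc * x) = jc ^ 3 * x by ring, jc_cube, one_mul] at this
      rw [this, show jc ^ 2 * (Complex.I * jc * t) = Complex.I * jc ^ 3 * t by ring]
  · rintro ⟨⟨⟨hT, hd⟩, hD⟩, hx0⟩
    rw [iInf_dist_rot1, dist_rot1] at hd
    refine ⟨⟨(tri_rot1 x).1 hT, hd⟩, ?_⟩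
    rintro ⟨t, ht, hz⟩
    rcases lt_or_eq_of_le ht with ht' | ht'
    · apply hD
      refine ⟨t, ht', ?_⟩
      rw [hz, show jc * (Complex.I * jc ^ 3 * t) = Complex.I * (jc ^ 3 * jc) * t by ring,
        jc_cube, one_mul]
    · apply hx0
      simp [hz, ht']

lemma isCompact_Tri : IsCompact Tri := by
  apply Set.Finite.isCompact_convexHull
  exact (Set.finite_singleton _).insert _ |>.insert _

lemma measurableSet_Tri : MeasurableSet Tri := isCompact_Tri.isClosed.measurableSet

lemma Dl_subset_span : ∀ l : Fin 3, Dl l ⊆ (Submodule.span ℝ {(Complex.I * jc ^ ((l:ℕ) + 1) : ℂ)} : Submodule ℝ ℂ) := by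
  intro l z hz
  have : ∃ t : ℝ, z = Complex.I * jc ^ ((l:ℕ) + 1) * t := by
    fin_cases l
    · obtain ⟨t, _, hz⟩ := hz
      exact ⟨t, by rw [hz]; norm_num⟩
    · obtain ⟨t, _, hz⟩ := hz
      exact ⟨t, hz⟩
    · obtain ⟨t, _, hz⟩ := hz
      exact ⟨t, hz⟩
  obtain ⟨t, ht⟩ := this
  rw [SetLike.mem_coe, Submodule.mem_span_singleton]
  exact ⟨t, by rw [Complex.real_smul, ht]; ring⟩

lemma span_w_ne_top (w : ℂ) (hw : w ≠ 0) :
    (Submodule.span ℝ {w} : Submodule ℝ ℂ) ≠ ⊤ := by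
  intro h
  have : w * Complex.I ∈ Submodule.span ℝ {w} := by rw [h]; trivial
  rw [Submodule.mem_span_singleton] at this
  obtain ⟨a, ha⟩ := this
  rw [Complex.real_smul] at ha
  have : (a : ℂ) = Complex.I := by
    apply mul_right_cancel₀ hw
    rw [ha, mul_comm]
  have him := congrArg Complex.im this
  simp at him

lemma Dl_null (l : Fin 3) : volume (Dl l) = 0 := by
  apply measure_mono_null (Dl_subset_span l)
  exact Measure.addHaar_submodule _ _ (span_w_ne_top _ (Ijc_ne_zero _))

lemma measurableSet_Dl (l : Fin 3) : MeasurableSet (Dl l) := by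
  have key : ∀ (w : ℂ) (s : Set ℝ), w ≠ 0 → MeasurableSet s →
      MeasurableSet ((fun t : ℝ => w * (t : ℂ)) '' s) := by
    intro w s hw hs
    have hcont : Continuous (fun t : ℝ => w * (t : ℂ)) :=
      continuous_const.mul Complex.continuous_ofReal
    have hinj : Function.Injective (fun t : ℝ => w * (t : ℂ)) := by
      intro a b hab
      have := mul_left_cancel₀ hw hab
      exact_mod_cast this
    exact (hcont.measurableEmbedding hinj).measurableSet_image' hs
  fin_cases l
  · have : Dl 0 = (fun t : ℝ => (Complex.I * jc) * (t : ℂ)) '' (Set.Iio 0) := by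
      ext z; constructor
      · rintro ⟨t, ht, rfl⟩; exact ⟨t, ht, rfl⟩
      · rintro ⟨t, ht, rfl⟩; exact ⟨t, ht, rfl⟩
    rw [show (⟨0, by norm_num⟩ : Fin 3) = 0 from rfl, this]
    exact key _ _ (by simpa using Ijc_ne_zero 1) measurableSet_Iio
  · have : Dl 1 = (fun t : ℝ => (Complex.I * jc ^ 2) * (t : ℂ)) '' (Set.Iic 0) := by
      ext z; constructor
      · rintro ⟨t, ht, rfl⟩; exact ⟨t, ht, rfl⟩
      · rintro ⟨t, ht, rfl⟩; exact ⟨t, ht, rfl⟩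
    rw [show (⟨1, by norm_num⟩ : Fin 3) = 1 from rfl, this]
    exact key _ _ (Ijc_ne_zero 2) measurableSet_Iic
  · have : Dl 2 = (fun t : ℝ => (Complex.I * jc ^ 3) * (t : ℂ)) '' (Set.Iic 0) := by
      ext z; constructor
      · rintro ⟨t, ht, rfl⟩; exact ⟨t, ht, rfl⟩
      · rintro ⟨t, ht, rfl⟩; exact ⟨t, ht, rfl⟩
    rw [show (⟨2, by norm_num⟩ : Fin 3) = 2 from rfl, this]
    exact key _ _ (Ijc_ne_zero 3) measurableSet_Iic

lemma measurableSet_cell (l : Fin 3) : MeasurableSet (cell l) := by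
  apply MeasurableSet.diff _ (measurableSet_Dl l)
  have : {x ∈ Tri | dist x (Bin l) = ⨅ m : Fin 3, dist x (Bin m)}
      = Tri ∩ {x : ℂ | dist x (Bin l) = ⨅ m : Fin 3, dist x (Bin m)} := rfl
  rw [this]
  apply measurableSet_Tri.inter
  have : IsClosed {x : ℂ | dist x (Bin l) = ⨅ m : Fin 3, dist x (Bin m)} := by
    apply isClosed_eq (continuous_id.dist continuous_const)
    simp only [iInf_fin3]
    exact ((continuous_id.dist continuous_const).min
      ((continuous_id.dist continuous_const).min (continuous_id.dist continuous_const)))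
  exact this.measurableSet

lemma tie_null (l m : Fin 3) (h : l ≠ m) :
    volume {x : ℂ | dist x (Bin l) = dist x (Bin m)} = 0 := by
  have : {x : ℂ | dist x (Bin l) = dist x (Bin m)}
      = (AffineSubspace.perpBisector (Bin l) (Bin m) : Set ℂ) := by
    ext x
    simp [AffineSubspace.mem_perpBisector_iff_dist_eq]
  rw [this]
  apply Measure.addHaar_affineSubspace
  intro htop
  have : Bin l ∈ AffineSubspace.perpBisector (Bin l) (Bin m) := by rw [htop]; trivial
  rw [AffineSubspace.mem_perpBisector_iff_dist_eq] at this
  simp only [dist_self] at this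
  exact bins_ne l m h (dist_eq_zero.1 this.symm)

lemma costs0 (c : ℂ → ℝ) (x : ℂ) : costs c 0 x = c x := rfl
lemma costs1 (c : ℂ → ℝ) (x : ℂ) : costs c 1 x = c (jc ^ 2 * x) := rfl
lemma costs2 (c : ℂ → ℝ) (x : ℂ) : costs c 2 x = c (jc * x) := rfl

lemma j2j2 (x : ℂ) : jc ^ 2 * (jc ^ 2 * x) = jc * x := by
  rw [show jc ^ 2 * (jc ^ 2 * x) = jc ^ 3 * (jc * x) by ring, jc_cube, one_mul]
lemma j1j2 (x : ℂ) : jc * (jc ^ 2 * x) = x := by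
  rw [show jc * (jc ^ 2 * x) = jc ^ 3 * x by ring, jc_cube, one_mul]
lemma j2j1 (x : ℂ) : jc ^ 2 * (jc * x) = x := by
  rw [show jc ^ 2 * (jc * x) = jc ^ 3 * x by ring, jc_cube, one_mul]
lemma j1j1 (x : ℂ) : jc * (jc * x) = jc ^ 2 * x := by ring

lemma C1_strict {c : ℂ → ℝ} (hC1 : C1 c) {x : ℂ} (hx : x ∈ Tri) (l : Fin 3)
    (hmin : ∀ m : Fin 3, m ≠ l → dist x (Bin l) < dist x (Bin m)) :
    ∀ m : Fin 3, m ≠ l → costs c l x < costs c m x := by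
  fin_cases l
  · intro m hm
    exact hC1 x hx m hm (hmin m hm)
  · -- l = 1, use y = jc^2 * x
    have hy : jc ^ 2 * x ∈ Tri := (tri_rot2 x).2 hx
    have key : ∀ m' : Fin 3, m' ≠ 0 → costs c 0 (jc ^ 2 * x) < costs c m' (jc ^ 2 * x) := by
      intro m' hm'
      apply hC1 _ hy m' hm'
      rw [dist_rot2, dist_rot2]
      apply hmin
      fin_cases m' <;> simp_all <;> decide
    intro m hm
    fin_cases m
    · have := key 2 (by decide)
      rw [costs0, costs2, j1j2] at this
      exact this
    · simp at hm
    · have := key 1 (by decide)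
      rw [costs0, costs1, j2j2] at this
      exact this
  · -- l = 2, use y = jc * x
    have hy : jc * x ∈ Tri := (tri_rot1 x).2 hx
    have key : ∀ m' : Fin 3, m' ≠ 0 → costs c 0 (jc * x) < costs c m' (jc * x) := by
      intro m' hm'
      apply hC1 _ hy m' hm'
      rw [dist_rot1, dist_rot1]
      apply hmin
      fin_cases m' <;> simp_all <;> decide
    intro m hm
    fin_cases m
    · have := key 1 (by decide)
      rw [costs0, costs1, j2j1] at this
      exact this
    · have := key 2 (by decide)
      rw [costs0, costs2, j1j1] at this
      exact this
    · simp at hm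

lemma exists_cell_mem {x : ℂ} (hx : x ∈ Tri) (hD : ∀ l, x ∉ Dl l) : ∃ l, x ∈ cell l := by
  obtain ⟨l, hl⟩ := exists_eq_ciInf_of_finite (f := fun m : Fin 3 => dist x (Bin m))
  exact ⟨l, ⟨hx, hl⟩, hD l⟩

lemma strict_min {x : ℂ}
    (hties : ∀ l m : Fin 3, l ≠ m → dist x (Bin l) ≠ dist x (Bin m)) :
    ∃ l, (dist x (Bin l) = ⨅ m : Fin 3, dist x (Bin m)) ∧
      ∀ m, m ≠ l → dist x (Bin l) < dist x (Bin m) := by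
  obtain ⟨l, hl⟩ := exists_eq_ciInf_of_finite (f := fun m : Fin 3 => dist x (Bin m))
  refine ⟨l, hl, fun m hm => ?_⟩
  have h1 : dist x (Bin l) ≤ dist x (Bin m) := by
    rw [hl]
    exact ciInf_le (Set.finite_range _).bddBelow m
  exact lt_of_le_of_ne h1 (hties l m (Ne.symm hm))


def gfun (c : ℂ → ℝ) (x : ℂ) : ℝ := Finset.univ.inf' Finset.univ_nonempty fun l => costs c l x

lemma sup'_fin3 (f : Fin 3 → ℝ) (h : (Finset.univ : Finset (Fin 3)).Nonempty) :
    Finset.univ.sup' h f = max (f 0) (max (f 1) (f 2)) := by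
  apply le_antisymm
  · apply Finset.sup'_le
    intro m _
    fin_cases m
    · exact le_max_left _ _
    · exact le_trans (le_max_left _ _) (le_max_right _ _)
    · exact le_trans (le_max_right _ _) (le_max_right _ _)
  · exact max_le (Finset.le_sup' f (Finset.mem_univ 0))
      (max_le (Finset.le_sup' f (Finset.mem_univ 1)) (Finset.le_sup' f (Finset.mem_univ 2)))

lemma costs_nonneg {c : ℂ → ℝ} (hc : ∀ x, 0 ≤ c x) (l : Fin 3) (x : ℂ) : 0 ≤ costs c l x := by
  fin_cases l <;> apply hc

lemma gfun_le (c : ℂ → ℝ) (l : Fin 3) (x : ℂ) : gfun c x ≤ costs c l x :=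
  Finset.inf'_le _ (Finset.mem_univ l)

lemma gfun_nonneg {c : ℂ → ℝ} (hc : ∀ x, 0 ≤ c x) (x : ℂ) : 0 ≤ gfun c x := by
  apply Finset.le_inf'
  intro l _
  exact costs_nonneg hc l x

lemma gfun_eq_sum {c : ℂ → ℝ} (hC1 : C1 c) {x : ℂ} (hx : x ∈ Tri)
    (hD : ∀ l, x ∉ Dl l)
    (hties : ∀ l m : Fin 3, l ≠ m → dist x (Bin l) ≠ dist x (Bin m)) :
    gfun c x = ∑ l : Fin 3, (cell l).indicator (costs c l) x := by
  obtain ⟨l, hl, hstrict⟩ := strict_min hties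
  have hcell : x ∈ cell l := ⟨⟨hx, hl⟩, hD l⟩
  have hnotcell : ∀ m, m ≠ l → x ∉ cell m := by
    intro m hm ⟨⟨_, hdm⟩, _⟩
    have := hstrict m hm
    rw [hdm, ← hl] at this
    exact lt_irrefl _ this
  have hsum : ∑ m : Fin 3, (cell m).indicator (costs c m) x = costs c l x := by
    rw [Finset.sum_eq_single l]
    · exact Set.indicator_of_mem hcell _
    · intro m _ hm
      exact Set.indicator_of_notMem (hnotcell m hm) _
    · intro h
      exact absurd (Finset.mem_univ l) h
  rw [hsum]
  apply le_antisymm (gfun_le c l x)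
  apply Finset.le_inf'
  intro m _
  rcases eq_or_ne m l with rfl | hm
  · exact le_refl _
  · exact (C1_strict hC1 hx l hstrict m hm).le

lemma le_optLoad {c : ℂ → ℝ} {n : ℕ} (x : Fin n → ℂ) :
    (∑ k, gfun c (x k)) / 3 ≤ optLoad c x := by
  apply Finset.le_inf'
  intro A _
  rw [div_le_iff₀ (by norm_num : (0:ℝ) < 3)]
  calc ∑ k, gfun c (x k) ≤ ∑ k, costs c (A k) (x k) :=
        Finset.sum_le_sum fun k _ => gfun_le c (A k) (x k)
    _ = ∑ l : Fin 3, ∑ k, if A k = l then costs c l (x k) else 0 := by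
        rw [Finset.sum_comm]
        congr 1
        ext k
        simp [Finset.sum_ite_eq]
    _ ≤ ∑ _l : Fin 3, load c x A :=
        Finset.sum_le_sum fun l _ =>
          Finset.le_sup' (fun l => ∑ k, if A k = l then costs c l (x k) else 0)
            (Finset.mem_univ l)
    _ = load c x A * 3 := by
        simp [Finset.sum_const, Finset.card_univ]
        ring

lemma optLoad_le_subLoad {c : ℂ → ℝ} (hc : ∀ x, 0 ≤ c x) {n : ℕ} (x : Fin n → ℂ)
    (hx : ∀ k, ∃ l, x k ∈ cell l) : optLoad c x ≤ subLoad c x := by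
  choose A hA using hx
  refine le_trans (Finset.inf'_le _ (Finset.mem_univ A)) ?_
  apply Finset.sup'_mono_fun
  intro l _
  apply Finset.sum_le_sum
  intro k _
  by_cases h : A k = l
  · rw [if_pos h]
    rw [← h]
    exact le_of_eq (Set.indicator_of_mem (hA k) _).symm
  · rw [if_neg h]
    exact Set.indicator_nonneg (fun y _ => costs_nonneg hc l y) _

lemma cell_subset_Tri (l : Fin 3) : cell l ⊆ Tri := fun x hx => hx.1.1

lemma measurable_costs {c : ℂ → ℝ} (hc : Measurable c) (l : Fin 3) : Measurable (costs c l) := by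
  fin_cases l
  · exact hc
  · exact hc.comp (continuous_const.mul continuous_id).measurable
  · exact hc.comp (continuous_const.mul continuous_id).measurable

lemma inf'_fin3 (f : Fin 3 → ℝ) (h : (Finset.univ : Finset (Fin 3)).Nonempty) :
    Finset.univ.inf' h f = min (f 0) (min (f 1) (f 2)) := by
  apply le_antisymm
  · exact le_min (Finset.inf'_le f (Finset.mem_univ 0))
      (le_min (Finset.inf'_le f (Finset.mem_univ 1)) (Finset.inf'_le f (Finset.mem_univ 2)))
  · apply Finset.le_inf'
    intro m _
    fin_cases m
    · exact min_le_left _ _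
    · exact le_trans (min_le_right _ _) (min_le_left _ _)
    · exact le_trans (min_le_right _ _) (min_le_right _ _)

lemma measurable_gfun {c : ℂ → ℝ} (hc : Measurable c) : Measurable (gfun c) := by
  have : gfun c = fun x => min (costs c 0 x) (min (costs c 1 x) (costs c 2 x)) := by
    funext x
    exact inf'_fin3 _ _
  rw [this]
  exact (measurable_costs hc 0).min ((measurable_costs hc 1).min (measurable_costs hc 2))

lemma isFiniteTri : IsFiniteMeasure (volume.restrict Tri) :=
  ⟨by rw [Measure.restrict_apply_univ]; exact isCompact_Tri.measure_lt_top⟩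

lemma costs_le_of_bdd {c : ℂ → ℝ} {M : ℝ} (hM : ∀ y ∈ Tri, c y ≤ M) :
    ∀ l : Fin 3, ∀ x ∈ Tri, costs c l x ≤ M := by
  intro l x hx
  fin_cases l
  · exact hM x hx
  · exact hM _ ((tri_rot2 x).2 hx)
  · exact hM _ ((tri_rot1 x).2 hx)

lemma integrable_F {c : ℂ → ℝ} (hc_meas : Measurable c) (hc_nonneg : ∀ x, 0 ≤ c x)
    {M : ℝ} (hM : ∀ y ∈ Tri, c y ≤ M) (l : Fin 3) :
    Integrable ((cell l).indicator (costs c l)) (volume.restrict Tri) := by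
  haveI := isFiniteTri
  refine ⟨((measurable_costs hc_meas l).indicator
    (measurableSet_cell l)).aestronglyMeasurable, ?_⟩
  apply HasFiniteIntegral.of_bounded (C := max M 0)
  apply ae_of_all
  intro x
  rw [Real.norm_eq_abs]
  by_cases h : x ∈ cell l
  · rw [Set.indicator_of_mem h, abs_of_nonneg (costs_nonneg hc_nonneg l x)]
    exact le_max_of_le_left (costs_le_of_bdd hM l x (cell_subset_Tri l h))
  · rw [Set.indicator_of_notMem h]
    simp

lemma integrable_gfun {c : ℂ → ℝ} (hc_meas : Measurable c) (hc_nonneg : ∀ x, 0 ≤ c x)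
    {M : ℝ} (hM : ∀ y ∈ Tri, c y ≤ M) :
    Integrable (gfun c) (volume.restrict Tri) := by
  haveI := isFiniteTri
  refine ⟨(measurable_gfun hc_meas).aestronglyMeasurable, ?_⟩
  apply HasFiniteIntegral.of_bounded (C := max M 0)
  filter_upwards [ae_restrict_mem measurableSet_Tri] with x hx
  rw [Real.norm_eq_abs, abs_of_nonneg (gfun_nonneg hc_nonneg x)]
  exact le_max_of_le_left ((gfun_le c 0 x).trans (costs_le_of_bdd hM 0 x hx))

lemma integral_F0 {c : ℂ → ℝ} :
    ∫ x, (cell 0).indicator (costs c 0) x ∂(volume.restrict Tri) = gamma c := by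
  rw [integral_indicator (measurableSet_cell 0), Measure.restrict_restrict (measurableSet_cell 0),
    Set.inter_eq_self_of_subset_left (cell_subset_Tri 0)]
  rfl

lemma volume_singleton_cplx (z : ℂ) : volume ({z} : Set ℂ) = 0 := by
  exact measure_singleton z

def uj : Circle := Circle.exp (2 * Real.pi / 3)

lemma uj_coe : (uj : ℂ) = jc := jc_eq_circle.symm

lemma integral_F_rot {c : ℂ → ℝ} (l : Fin 3) :
    ∫ x, (cell l).indicator (costs c l) x ∂(volume.restrict Tri) = gamma c := by
  rw [integral_indicator (measurableSet_cell l), Measure.restrict_restrict (measurableSet_cell l),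
    Set.inter_eq_self_of_subset_left (cell_subset_Tri l)]
  fin_cases l
  · rfl
  · -- cell 1, rotate by jc^2
    set e := rotation (uj * uj) with he
    have happ : ∀ z, e z = jc ^ 2 * z := by
      intro z
      rw [he, rotation_apply]
      have hcoe : ((uj * uj : Circle) : ℂ) = jc ^ 2 := by push_cast [uj_coe]; ring
      rw [hcoe]
    have hfe : costs c 1 = fun x => c (e x) := by
      funext z
      rw [costs1, happ]
    have hset : cell 1 = e ⁻¹' (cell 0) \ {0} := by
      ext z
      rw [Set.mem_diff, Set.mem_preimage, Set.mem_singleton_iff, cell1_iff, happ]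
    have hme : MeasurePreserving e volume volume := e.measurePreserving
    have hemb : MeasurableEmbedding e := e.toHomeomorph.measurableEmbedding
    show ∫ x in cell 1, costs c 1 x = gamma c
    rw [hfe, hset, setIntegral_congr_set (diff_ae_eq_self.2 (measure_mono_null
      Set.inter_subset_right (volume_singleton_cplx 0))),
      hme.setIntegral_preimage_emb hemb]
    rfl
  · -- cell 2, rotate by jc
    set e := rotation uj with he
    have happ : ∀ z, e z = jc * z := by
      intro z
      rw [he, rotation_apply, uj_coe]
    have hfe : costs c 2 = fun x => c (e x) := by
      funext z
      rw [costs2, happ]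
    have hset : cell 2 = e ⁻¹' (cell 0) \ {0} := by
      ext z
      rw [Set.mem_diff, Set.mem_preimage, Set.mem_singleton_iff, cell2_iff, happ]
    have hme : MeasurePreserving e volume volume := e.measurePreserving
    have hemb : MeasurableEmbedding e := e.toHomeomorph.measurableEmbedding
    show ∫ x in cell 2, costs c 2 x = gamma c
    rw [hfe, hset, setIntegral_congr_set (diff_ae_eq_self.2 (measure_mono_null
      Set.inter_subset_right (volume_singleton_cplx 0))),
      hme.setIntegral_preimage_emb hemb]
    rfl

def BAD : Set ℂ :=
  (Dl 0 ∪ Dl 1 ∪ Dl 2) ∪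
    ({x : ℂ | dist x (Bin 0) = dist x (Bin 1)} ∪ {x : ℂ | dist x (Bin 0) = dist x (Bin 2)} ∪
      {x : ℂ | dist x (Bin 1) = dist x (Bin 2)})

lemma BAD_null : volume BAD = 0 := by
  apply measure_union_null
  · exact measure_union_null (measure_union_null (Dl_null 0) (Dl_null 1)) (Dl_null 2)
  · exact measure_union_null (measure_union_null (tie_null 0 1 (by decide))
      (tie_null 0 2 (by decide))) (tie_null 1 2 (by decide))

lemma notin_BAD_Dl {x : ℂ} (h : x ∉ BAD) : ∀ l, x ∉ Dl l := by
  intro l hl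
  apply h
  left
  fin_cases l
  · exact Or.inl (Or.inl hl)
  · exact Or.inl (Or.inr hl)
  · exact Or.inr hl

lemma notin_BAD_ties {x : ℂ} (h : x ∉ BAD) :
    ∀ l m : Fin 3, l ≠ m → dist x (Bin l) ≠ dist x (Bin m) := by
  have h01 : ¬ dist x (Bin 0) = dist x (Bin 1) := fun hh => h (Or.inr (Or.inl (Or.inl hh)))
  have h02 : ¬ dist x (Bin 0) = dist x (Bin 2) := fun hh => h (Or.inr (Or.inl (Or.inr hh)))
  have h12 : ¬ dist x (Bin 1) = dist x (Bin 2) := fun hh => h (Or.inr (Or.inr hh))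
  intro l m hlm
  fin_cases l <;> fin_cases m <;> simp_all <;>
    first
      | exact h01 | exact h02 | exact h12
      | exact fun hh => h01 hh.symm | exact fun hh => h02 hh.symm | exact fun hh => h12 hh.symm

lemma integral_gfun {c : ℂ → ℝ} (hC1 : C1 c) (hc_meas : Measurable c) (hc_nonneg : ∀ x, 0 ≤ c x)
    {M : ℝ} (hM : ∀ y ∈ Tri, c y ≤ M) :
    ∫ x, gfun c x ∂(volume.restrict Tri) = 3 * gamma c := by
  have hae : gfun c =ᵐ[volume.restrict Tri]
      fun x => ∑ l : Fin 3, (cell l).indicator (costs c l) x := by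
    have h2 : ∀ᵐ x ∂(volume.restrict Tri), x ∉ BAD :=
      ae_restrict_of_ae (measure_eq_zero_iff_ae_notMem.1 BAD_null)
    filter_upwards [ae_restrict_mem measurableSet_Tri, h2] with x hx hbad
    exact gfun_eq_sum hC1 hx (notin_BAD_Dl hbad) (notin_BAD_ties hbad)
  rw [integral_congr_ae hae, integral_finset_sum _
    (fun l _ => integrable_F hc_meas hc_nonneg hM l)]
  rw [Fin.sum_univ_three, integral_F_rot 0, integral_F_rot 1, integral_F_rot 2]
  ring

lemma notin_union_Dl {x : ℂ} (h : x ∉ Dl 0 ∪ Dl 1 ∪ Dl 2) : ∀ l, x ∉ Dl l := by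
  intro l hl
  apply h
  fin_cases l
  · exact Or.inl (Or.inl hl)
  · exact Or.inl (Or.inr hl)
  · exact Or.inr hl


/-- **Law of large numbers for the optimal and suboptimal loads** (Theorem 1.1):
under assumption (C1), almost surely `ρₙ/n → γ` and `ρ̄ₙ/n → γ`. -/
theorem lln_optimal_and_suboptimal_load
    (c : ℂ → ℝ) (hc_meas : Measurable c) (hc_nonneg : ∀ x, 0 ≤ c x)
    (hc_bdd : BddAbove (c '' Tri))
    (hC1 : C1 c)
    {Ω : Type*} [MeasurableSpace Ω] (P : Measure Ω) [IsProbabilityMeasure P]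
    (X : ℕ → Ω → ℂ) (hX_meas : ∀ k, Measurable (X k))
    (hX_law : ∀ k, Measure.map (X k) P = volume.restrict Tri)
    (hX_indep : ProbabilityTheory.iIndepFun X P) :
    ∀ᵐ ω ∂P,
      Tendsto (fun n : ℕ => optLoad c (fun k : Fin n => X k ω) / n) atTop (nhds (gamma c)) ∧
      Tendsto (fun n : ℕ => subLoad c (fun k : Fin n => X k ω) / n) atTop (nhds (gamma c)) := by
  obtain ⟨M, hM'⟩ := hc_bdd
  have hM : ∀ y ∈ Tri, c y ≤ M := fun y hy => hM' (Set.mem_image_of_mem c hy)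
  have slln : ∀ f : ℂ → ℝ, Measurable f → Integrable f (volume.restrict Tri) →
      ∀ᵐ ω ∂P, Tendsto (fun n : ℕ => (∑ k ∈ Finset.range n, f (X k ω)) / n) atTop
        (𝓝 (∫ x, f x ∂(volume.restrict Tri))) := by
    intro f hf hfint
    have hint : Integrable (fun ω => f (X 0 ω)) P := by
      have h1 : Integrable f (Measure.map (X 0) P) := by rw [hX_law 0]; exact hfint
      exact (integrable_map_measure hf.aestronglyMeasurable (hX_meas 0).aemeasurable).1 h1
    have hindep : Pairwise (Function.onFun (ProbabilityTheory.IndepFun · · P) fun k ω => f (X k ω)) := by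
      intro i j hij
      exact (hX_indep.indepFun hij).comp hf hf
    have hident : ∀ i, ProbabilityTheory.IdentDistrib (fun ω => f (X i ω))
        (fun ω => f (X 0 ω)) P P := by
      intro i
      refine ⟨(hf.comp (hX_meas i)).aemeasurable, (hf.comp (hX_meas 0)).aemeasurable, ?_⟩
      show Measure.map (f ∘ X i) P = Measure.map (f ∘ X 0) P
      rw [← Measure.map_map hf (hX_meas i), ← Measure.map_map hf (hX_meas 0), hX_law i, hX_law 0]
    have hexp : (∫ ωx, f (X 0 ωx) ∂P) = ∫ x, f x ∂(volume.restrict Tri) := by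
      rw [← hX_law 0, integral_map (hX_meas 0).aemeasurable hf.aestronglyMeasurable]
    have hsl := ProbabilityTheory.strong_law_ae (fun k ω => f (X k ω)) hint hindep hident
    simp only [smul_eq_mul] at hsl
    rw [show (∫ ωx, f (X 0 ωx) ∂P) = ∫ x, f x ∂(volume.restrict Tri) from hexp] at hsl
    filter_upwards [hsl] with ω hω
    have : (fun n : ℕ => (∑ k ∈ Finset.range n, f (X k ω)) / n)
        = fun n : ℕ => (n : ℝ)⁻¹ • ∑ k ∈ Finset.range n, f (X k ω) := by
      funext n
      rw [smul_eq_mul, div_eq_inv_mul]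
    rw [this]
    exact hω
  have hmemG : ∀ᵐ ω ∂P, ∀ k, X k ω ∈ Tri \ (Dl 0 ∪ Dl 1 ∪ Dl 2) := by
    rw [ae_all_iff]
    intro k
    have hGmeas : MeasurableSet (Tri \ (Dl 0 ∪ Dl 1 ∪ Dl 2)) :=
      measurableSet_Tri.diff
        (((measurableSet_Dl 0).union (measurableSet_Dl 1)).union (measurableSet_Dl 2))
    rw [ae_iff]
    have hpre : {ω | ¬ X k ω ∈ Tri \ (Dl 0 ∪ Dl 1 ∪ Dl 2)}
        = X k ⁻¹' (Tri \ (Dl 0 ∪ Dl 1 ∪ Dl 2))ᶜ := rfl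
    rw [hpre, ← Measure.map_apply (hX_meas k) hGmeas.compl, hX_law k,
      Measure.restrict_apply hGmeas.compl]
    have hsubset : (Tri \ (Dl 0 ∪ Dl 1 ∪ Dl 2))ᶜ ∩ Tri ⊆ Dl 0 ∪ Dl 1 ∪ Dl 2 := by
      intro x hx
      obtain ⟨hx1, hx2⟩ := hx
      rw [Set.mem_compl_iff, Set.mem_diff] at hx1
      push_neg at hx1
      exact hx1 hx2
    exact measure_mono_null hsubset
      (measure_union_null (measure_union_null (Dl_null 0) (Dl_null 1)) (Dl_null 2))
  filter_upwards [slln _ ((measurable_costs hc_meas 0).indicator (measurableSet_cell 0))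
      (integrable_F hc_meas hc_nonneg hM 0),
    slln _ ((measurable_costs hc_meas 1).indicator (measurableSet_cell 1))
      (integrable_F hc_meas hc_nonneg hM 1),
    slln _ ((measurable_costs hc_meas 2).indicator (measurableSet_cell 2))
      (integrable_F hc_meas hc_nonneg hM 2),
    slln _ (measurable_gfun hc_meas) (integrable_gfun hc_meas hc_nonneg hM),
    hmemG] with ω h0 h1 h2 hg hG
  rw [integral_F_rot 0] at h0
  rw [integral_F_rot 1] at h1
  rw [integral_F_rot 2] at h2
  rw [integral_gfun hC1 hc_meas hc_nonneg hM] at hg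
  have hsub : Tendsto (fun n : ℕ => subLoad c (fun k : Fin n => X k ω) / n) atTop
      (𝓝 (gamma c)) := by
    have heq : ∀ n : ℕ, subLoad c (fun k : Fin n => X k ω) / n
        = max ((∑ k ∈ Finset.range n, (cell 0).indicator (costs c 0) (X k ω)) / n)
            (max ((∑ k ∈ Finset.range n, (cell 1).indicator (costs c 1) (X k ω)) / n)
              ((∑ k ∈ Finset.range n, (cell 2).indicator (costs c 2) (X k ω)) / n)) := by
      intro n
      rw [subLoad, sup'_fin3, max_div_div_right (Nat.cast_nonneg n),
        max_div_div_right (Nat.cast_nonneg n)]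
      rw [Fin.sum_univ_eq_sum_range (fun i => (cell 0).indicator (costs c 0) (X i ω)) n,
        Fin.sum_univ_eq_sum_range (fun i => (cell 1).indicator (costs c 1) (X i ω)) n,
        Fin.sum_univ_eq_sum_range (fun i => (cell 2).indicator (costs c 2) (X i ω)) n]
    have hmax : Tendsto (fun n : ℕ =>
        max ((∑ k ∈ Finset.range n, (cell 0).indicator (costs c 0) (X k ω)) / n)
          (max ((∑ k ∈ Finset.range n, (cell 1).indicator (costs c 1) (X k ω)) / n)
            ((∑ k ∈ Finset.range n, (cell 2).indicator (costs c 2) (X k ω)) / n))) atTop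
        (𝓝 (max (gamma c) (max (gamma c) (gamma c)))) := h0.max (h1.max h2)
    rw [max_self, max_self] at hmax
    exact Tendsto.congr (fun n => (heq n).symm) hmax
  have hlow : Tendsto (fun n : ℕ => ((∑ k ∈ Finset.range n, gfun c (X k ω)) / n) / 3) atTop
      (𝓝 (gamma c)) := by
    have := hg.div_const 3
    rw [show 3 * gamma c / 3 = gamma c by ring] at this
    exact this
  have hle1 : ∀ n : ℕ, ((∑ k ∈ Finset.range n, gfun c (X k ω)) / n) / 3
      ≤ optLoad c (fun k : Fin n => X k ω) / n := by
    intro n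
    rw [div_div, mul_comm (n : ℝ) 3, ← div_div]
    have hkey := le_optLoad (c := c) (x := fun k : Fin n => X k ω)
    rw [Fin.sum_univ_eq_sum_range (fun i => gfun c (X i ω)) n] at hkey
    rw [div_eq_mul_inv ((∑ k ∈ Finset.range n, gfun c (X k ω)) / 3),
      div_eq_mul_inv (optLoad c fun k : Fin n => X k ω)]
    exact mul_le_mul_of_nonneg_right hkey (inv_nonneg.2 (Nat.cast_nonneg n))
  have hle2 : ∀ n : ℕ, optLoad c (fun k : Fin n => X k ω) / n
      ≤ subLoad c (fun k : Fin n => X k ω) / n := by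
    intro n
    have hineq := optLoad_le_subLoad hc_nonneg (fun k : Fin n => X k ω)
      (fun k => exists_cell_mem (hG k).1 (notin_union_Dl (hG k).2))
    rw [div_eq_mul_inv, div_eq_mul_inv]
    exact mul_le_mul_of_nonneg_right hineq (inv_nonneg.2 (Nat.cast_nonneg n))
  exact ⟨tendsto_of_tendsto_of_tendsto_of_le_of_le hlow hsub hle1 hle2, hsub⟩


end LoadOpt
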